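/- Let Ā be a real n×n Hurwitz matrix and let Q be a real symmetric positive definite n×n matrix. Then there exists a real symmetric positive definite n×n matrix P satisfying the Lyapunov equation Āᵀ P + P Ā = -Q. -/

import Mathlib

open Matrix

/-- A real square matrix is Hurwitz if every eigenvalue (over ℂ) has
strictly negative real part. -/
def IsHurwitz {n : ℕ} (M : Matrix (Fin n) (Fin n) ℝ) : Prop :=
  ∀ μ ∈ spectrum ℂ (M.map (algebraMap ℝ ℂ)), μ.re < 0

section LyapProofAux

open Polynomial

namespace LyapAux

variable {n : ℕ}

/-- The Lyapunov operator `P ↦ Aᵀ * P + P * A`. -/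
noncomputable def lyapL (A : Matrix (Fin n) (Fin n) ℝ) :
    Matrix (Fin n) (Fin n) ℝ →ₗ[ℝ] Matrix (Fin n) (Fin n) ℝ :=
  LinearMap.mulLeft ℝ Aᵀ + LinearMap.mulRight ℝ A

@[simp] lemma lyapL_apply (A P : Matrix (Fin n) (Fin n) ℝ) :
    lyapL A P = Aᵀ * P + P * A := rfl

lemma eval_charpoly {m : ℕ} (M : Matrix (Fin m) (Fin m) ℂ) (μ : ℂ) :
    M.charpoly.eval μ = (μ • (1 : Matrix (Fin m) (Fin m) ℂ) - M).det := by
  have : M.charpoly.eval μ = ((charmatrix M).map (evalRingHom μ)).det := by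
    rw [Matrix.charpoly, ← coe_evalRingHom, RingHom.map_det]; rfl
  rw [this]
  congr 1
  ext i j
  by_cases h : i = j
  · subst h
    simp [charmatrix_apply_eq, Matrix.one_apply]
  · simp [charmatrix_apply_ne _ _ _ h, Matrix.one_apply, h]

lemma mem_spectrum_iff_root {m : ℕ} (M : Matrix (Fin m) (Fin m) ℂ) (μ : ℂ) :
    μ ∈ spectrum ℂ M ↔ M.charpoly.eval μ = 0 := by
  rw [spectrum.mem_iff, Matrix.isUnit_iff_isUnit_det, eval_charpoly,
    Algebra.algebraMap_eq_smul_one, isUnit_iff_ne_zero, not_not]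

lemma mem_spectrum_transpose {m : ℕ} {M : Matrix (Fin m) (Fin m) ℂ} {μ : ℂ} :
    μ ∈ spectrum ℂ Mᵀ ↔ μ ∈ spectrum ℂ M := by
  rw [spectrum.mem_iff, spectrum.mem_iff]
  have : algebraMap ℂ (Matrix (Fin m) (Fin m) ℂ) μ - Mᵀ
      = (algebraMap ℂ (Matrix (Fin m) (Fin m) ℂ) μ - M)ᵀ := by
    rw [Matrix.transpose_sub]
    congr 1
    simp [Algebra.algebraMap_eq_smul_one, Matrix.transpose_smul]
  rw [this, Matrix.isUnit_transpose]

lemma mem_spectrum_neg {m : ℕ} {M : Matrix (Fin m) (Fin m) ℂ} {μ : ℂ} :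
    μ ∈ spectrum ℂ (-M) ↔ -μ ∈ spectrum ℂ M := by
  rw [spectrum.mem_iff, spectrum.mem_iff]
  have : algebraMap ℂ (Matrix (Fin m) (Fin m) ℂ) μ - (-M)
      = -(algebraMap ℂ (Matrix (Fin m) (Fin m) ℂ) (-μ) - M) := by
    simp [Algebra.algebraMap_eq_smul_one]; module
  rw [this, IsUnit.neg_iff]

lemma pow_intertwine {m : ℕ} {B C P : Matrix (Fin m) (Fin m) ℂ} (h : B * P = P * C) :
    ∀ k : ℕ, B ^ k * P = P * C ^ k := by
  intro k
  induction k with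
  | zero => simp
  | succ k ih => rw [pow_succ, pow_succ, mul_assoc, h, ← mul_assoc, ih, mul_assoc]

lemma aeval_intertwine {m : ℕ} {B C P : Matrix (Fin m) (Fin m) ℂ} (h : B * P = P * C)
    (p : ℂ[X]) : (aeval B p) * P = P * (aeval C p) := by
  induction p using Polynomial.induction_on' with
  | add p q hp hq => simp [map_add, add_mul, mul_add, hp, hq]
  | monomial k c =>
      rw [aeval_monomial, aeval_monomial, mul_assoc, pow_intertwine h k,
        ← mul_assoc, ← mul_assoc]
      congr 1
      simp only [Algebra.algebraMap_eq_smul_one, Algebra.smul_mul_assoc, one_mul,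
        Algebra.mul_smul_comm, mul_one]

lemma lyapL_injective (hn : 0 < n) (A : Matrix (Fin n) (Fin n) ℝ) (hA : IsHurwitz A) :
    Function.Injective (lyapL A) := by
  haveI : Nonempty (Fin n) := ⟨⟨0, hn⟩⟩
  rw [injective_iff_map_eq_zero]
  intro P hP
  set f : Matrix (Fin n) (Fin n) ℝ →+* Matrix (Fin n) (Fin n) ℂ :=
    (algebraMap ℝ ℂ).mapMatrix with hf
  have hcomm : f Aᵀ * f P = f P * (-(f A)) := by
    rw [← _root_.map_mul, ← map_neg, ← _root_.map_mul, ← sub_eq_zero, ← map_sub]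
    have h2 : Aᵀ * P - P * -A = Aᵀ * P + P * A := by noncomm_ring
    rw [h2, ← lyapL_apply, hP, map_zero]
  set p := (-(f A)).charpoly with hp
  have h1 : (aeval (f Aᵀ) p) * f P = 0 := by
    rw [aeval_intertwine hcomm, Matrix.aeval_self_charpoly, mul_zero]
  have hmapA : f A = A.map (algebraMap ℝ ℂ) := rfl
  have hspec : ∀ μ ∈ spectrum ℂ (f Aᵀ), p.eval μ ≠ 0 := by
    intro μ hμ h0
    have hμA : μ ∈ spectrum ℂ (f A) := by
      have ht : f Aᵀ = (f A)ᵀ := by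
        simp only [hf, RingHom.mapMatrix_apply, Matrix.transpose_map]
      rw [ht, mem_spectrum_transpose] at hμ; exact hμ
    have h3 : -μ ∈ spectrum ℂ (f A) := mem_spectrum_neg.mp ((mem_spectrum_iff_root _ μ).mpr h0)
    have r1 : μ.re < 0 := hA μ (hmapA ▸ hμA)
    have r2 : (-μ).re < 0 := hA _ (hmapA ▸ h3)
    rw [Complex.neg_re] at r2; linarith
  have hunit : IsUnit (aeval (f Aᵀ) p) := by
    apply spectrum.isUnit_of_zero_notMem (R := ℂ)
    rw [spectrum.map_polynomial_aeval_of_nonempty (f Aᵀ) p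
      (spectrum.nonempty_of_isAlgClosed_of_finiteDimensional ℂ (f Aᵀ))]
    rintro ⟨μ, hμ, h0⟩
    exact hspec μ hμ h0
  have hP0 : f P = 0 := hunit.mul_left_cancel (by rw [h1, mul_zero])
  ext i j
  have := congrArg (fun M => M i j) hP0
  simpa [hf, RingHom.mapMatrix_apply, Matrix.map_apply] using this

lemma scalar_spectrum {m : ℕ} (hn : 0 < m) {c μ : ℂ} :
    μ ∈ spectrum ℂ (c • (1 : Matrix (Fin m) (Fin m) ℂ)) ↔ μ = c := by
  rw [spectrum.mem_iff, Matrix.isUnit_iff_isUnit_det, Algebra.algebraMap_eq_smul_one,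
    ← sub_smul, Matrix.det_smul, Matrix.det_one, mul_one, isUnit_iff_ne_zero, not_not,
    pow_eq_zero_iff (by simpa using hn.ne'), sub_eq_zero]

lemma map_path (A : Matrix (Fin n) (Fin n) ℝ) (t : ℝ) :
    (t • A - (1 - t) • 1).map (algebraMap ℝ ℂ)
      = (t : ℂ) • A.map (algebraMap ℝ ℂ) - ((1 - t : ℝ) : ℂ) • 1 := by
  ext i j
  by_cases h : i = j <;>
    simp [Matrix.map_apply, Matrix.one_apply, h]

lemma hurwitz_path (hn : 0 < n) (A : Matrix (Fin n) (Fin n) ℝ) (hA : IsHurwitz A) {t : ℝ}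
    (ht0 : 0 ≤ t) (ht1 : t ≤ 1) : IsHurwitz (t • A - (1 - t) • 1) := by
  intro μ hμ
  rw [map_path] at hμ
  rcases eq_or_lt_of_le ht0 with h0 | h0
  · rw [← h0] at hμ
    have : μ ∈ spectrum ℂ ((-1 : ℂ) • (1 : Matrix (Fin n) (Fin n) ℂ)) := by
      convert hμ using 2
      push_cast
      module
    rw [scalar_spectrum hn] at this
    simp [this]
  · have hne : (t : ℂ) ≠ 0 := by exact_mod_cast h0.ne'
    set Ac := A.map (algebraMap ℝ ℂ) with hAc
    set ν : ℂ := (μ + (1 - t)) / t with hν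
    have key : algebraMap ℂ (Matrix (Fin n) (Fin n) ℂ) μ - ((t : ℂ) • Ac - ((1 - t : ℝ) : ℂ) • 1)
        = (t : ℂ) • (algebraMap ℂ (Matrix (Fin n) (Fin n) ℂ) ν - Ac) := by
      rw [Algebra.algebraMap_eq_smul_one, Algebra.algebraMap_eq_smul_one, smul_sub, smul_smul,
        mul_div_cancel₀ _ hne]
      push_cast
      module
    rw [spectrum.mem_iff, key] at hμ
    have hνs : ν ∈ spectrum ℂ Ac := by
      rw [spectrum.mem_iff]
      intro hu
      apply hμ
      have : (t : ℂ) • (algebraMap ℂ (Matrix (Fin n) (Fin n) ℂ) ν - Ac)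
          = ((t : ℂ) • (1 : Matrix (Fin n) (Fin n) ℂ)) * (algebraMap ℂ _ ν - Ac) := by
        rw [Matrix.smul_mul, one_mul]
      rw [this]
      refine IsUnit.mul ?_ hu
      rw [Matrix.isUnit_iff_isUnit_det, Matrix.det_smul, Matrix.det_one, mul_one,
        isUnit_iff_ne_zero]
      exact pow_ne_zero _ hne
    have hre : ν.re < 0 := hA ν hνs
    have hμeq : μ = (t : ℂ) * ν - ((1 - t : ℝ) : ℂ) := by
      rw [hν]
      field_simp
      push_cast; ring
    have : μ.re = t * ν.re - (1 - t) := by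
      rw [hμeq]
      simp [Complex.sub_re, Complex.mul_re]
    rw [this]
    nlinarith

noncomputable def bM : Module.Basis (Fin n × Fin n) ℝ (Matrix (Fin n) (Fin n) ℝ) :=
  Matrix.stdBasis ℝ (Fin n) (Fin n)

/-- The path of matrices from `-1` to `Abar`. -/
noncomputable def At (Abar : Matrix (Fin n) (Fin n) ℝ) (t : ℝ) :
    Matrix (Fin n) (Fin n) ℝ := t • Abar - (1 - t) • 1

/-- Matrix of the Lyapunov operator along the path. -/
noncomputable def Mt (Abar : Matrix (Fin n) (Fin n) ℝ) (t : ℝ) :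
    Matrix (Fin n × Fin n) (Fin n × Fin n) ℝ :=
  t • LinearMap.toMatrix bM bM (lyapL Abar) + (2 * t - 2) • 1

lemma lyapL_At (Abar : Matrix (Fin n) (Fin n) ℝ) (t : ℝ) :
    lyapL (At Abar t) = t • lyapL Abar + (2 * t - 2) • LinearMap.id := by
  apply LinearMap.ext
  intro P
  simp only [lyapL_apply, LinearMap.add_apply, LinearMap.smul_apply, LinearMap.id_apply, At,
    Matrix.transpose_sub, Matrix.transpose_smul, Matrix.transpose_one]
  rw [Matrix.sub_mul, Matrix.mul_sub, Matrix.smul_mul, Matrix.smul_mul, Matrix.mul_smul,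
    Matrix.mul_smul, Matrix.one_mul, Matrix.mul_one]
  module

lemma toMatrix_At (Abar : Matrix (Fin n) (Fin n) ℝ) (t : ℝ) :
    LinearMap.toMatrix bM bM (lyapL (At Abar t)) = Mt Abar t := by
  rw [lyapL_At, map_add, _root_.map_smul, _root_.map_smul, LinearMap.toMatrix_id, Mt]

lemma mulVec_equivFun (f : Matrix (Fin n) (Fin n) ℝ →ₗ[ℝ] Matrix (Fin n) (Fin n) ℝ)
    (x : Matrix (Fin n) (Fin n) ℝ) :
    (LinearMap.toMatrix bM bM f) *ᵥ (bM.equivFun x) = bM.equivFun (f x) := by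
  have h := LinearMap.toMatrix_mulVec_repr bM bM f x
  ext i
  have h1 := congrFun h i
  simpa [Module.Basis.equivFun_apply] using h1

lemma det_Mt_ne_zero (hn : 0 < n) (Abar : Matrix (Fin n) (Fin n) ℝ) (hA : IsHurwitz Abar)
    {t : ℝ} (ht0 : 0 ≤ t) (ht1 : t ≤ 1) : (Mt Abar t).det ≠ 0 := by
  intro hdet
  obtain ⟨v, hv, hv0⟩ := (Matrix.exists_mulVec_eq_zero_iff).mpr hdet
  apply hv
  set x := bM.equivFun.symm v with hx
  have hvx : v = bM.equivFun x := by rw [hx, LinearEquiv.apply_symm_apply]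
  have h1 : bM.equivFun (lyapL (At Abar t) x) = 0 := by
    rw [← mulVec_equivFun, toMatrix_At, ← hvx, hv0]
  have h2 : lyapL (At Abar t) x = 0 := by
    have h4 := congrArg bM.equivFun.symm h1
    rwa [LinearEquiv.symm_apply_apply, map_zero] at h4
  have h3 : x = 0 :=
    lyapL_injective hn (At Abar t) (hurwitz_path hn Abar hA ht0 ht1)
      (by rw [h2, map_zero])
  rw [hvx, h3, map_zero]

/-- The solution path. -/
noncomputable def Pt (Abar Q : Matrix (Fin n) (Fin n) ℝ) (t : ℝ) :
    Matrix (Fin n) (Fin n) ℝ :=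
  bM.equivFun.symm ((Mt Abar t)⁻¹ *ᵥ bM.equivFun (-Q))

lemma lyapL_Pt (hn : 0 < n) (Abar : Matrix (Fin n) (Fin n) ℝ) (hA : IsHurwitz Abar)
    (Q : Matrix (Fin n) (Fin n) ℝ) {t : ℝ} (ht0 : 0 ≤ t) (ht1 : t ≤ 1) :
    lyapL (At Abar t) (Pt Abar Q t) = -Q := by
  have hdet : IsUnit (Mt Abar t).det :=
    isUnit_iff_ne_zero.mpr (det_Mt_ne_zero hn Abar hA ht0 ht1)
  apply bM.equivFun.injective
  rw [← mulVec_equivFun, toMatrix_At, Pt, LinearEquiv.apply_symm_apply,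
    Matrix.mulVec_mulVec, Matrix.mul_nonsing_inv _ hdet, Matrix.one_mulVec]

lemma Pt_isSymm (hn : 0 < n) (Abar : Matrix (Fin n) (Fin n) ℝ) (hA : IsHurwitz Abar)
    (Q : Matrix (Fin n) (Fin n) ℝ) (hQsymm : Q.IsSymm) {t : ℝ} (ht0 : 0 ≤ t) (ht1 : t ≤ 1) :
    (Pt Abar Q t).IsSymm := by
  have h := lyapL_Pt hn Abar hA Q ht0 ht1
  have hT : lyapL (At Abar t) (Pt Abar Q t)ᵀ = -Q := by
    have h2 := congrArg Matrix.transpose h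
    rw [lyapL_apply, Matrix.transpose_add, Matrix.transpose_mul, Matrix.transpose_mul,
      Matrix.transpose_transpose, Matrix.transpose_neg, hQsymm] at h2
    rw [lyapL_apply, add_comm]
    exact h2
  exact lyapL_injective hn (At Abar t) (hurwitz_path hn Abar hA ht0 ht1) (hT.trans h.symm)

lemma Pt_mulVec_inj (hn : 0 < n) (Abar : Matrix (Fin n) (Fin n) ℝ) (hA : IsHurwitz Abar)
    (Q : Matrix (Fin n) (Fin n) ℝ) (hQsymm : Q.IsSymm) (hQ : Q.PosDef)
    {t : ℝ} (ht0 : 0 ≤ t) (ht1 : t ≤ 1) {v : Fin n → ℝ}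
    (hv : (Pt Abar Q t) *ᵥ v = 0) : v = 0 := by
  by_contra hv0
  have h := lyapL_Pt hn Abar hA Q ht0 ht1
  have hsymm := Pt_isSymm hn Abar hA Q hQsymm ht0 ht1
  set P := Pt Abar Q t
  set A := At Abar t
  have h1 : (Aᵀ * P) *ᵥ v = 0 := by
    rw [← Matrix.mulVec_mulVec, hv, Matrix.mulVec_zero]
  have hvm : v ᵥ* P = 0 := by
    rw [← hsymm, Matrix.vecMul_transpose, hv]
  have h2 : v ⬝ᵥ ((P * A) *ᵥ v) = 0 := by
    rw [Matrix.dotProduct_mulVec, ← Matrix.vecMul_vecMul, hvm, Matrix.zero_vecMul,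
      zero_dotProduct]
  have hdot : v ⬝ᵥ ((Aᵀ * P + P * A) *ᵥ v) = 0 := by
    rw [Matrix.add_mulVec, dotProduct_add, h1, dotProduct_zero, h2, add_zero]
  rw [lyapL_apply] at h
  rw [h, Matrix.neg_mulVec, dotProduct_neg, neg_eq_zero] at hdot
  have hpos := hQ.dotProduct_mulVec_pos hv0
  rw [star_trivial] at hpos
  rw [hdot] at hpos
  exact lt_irrefl 0 hpos

lemma Pt_zero (hn : 0 < n) (Abar : Matrix (Fin n) (Fin n) ℝ) (hA : IsHurwitz Abar)
    (Q : Matrix (Fin n) (Fin n) ℝ) : Pt Abar Q 0 + Pt Abar Q 0 = Q := by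
  have h := lyapL_Pt hn Abar hA Q (le_refl 0) zero_le_one
  have hA0 : At Abar 0 = -1 := by
    simp [At]
  rw [hA0, lyapL_apply, Matrix.transpose_neg, Matrix.transpose_one, Matrix.neg_mul,
    Matrix.one_mul, Matrix.mul_neg, Matrix.mul_one, ← neg_add] at h
  exact neg_injective h

lemma Pt_continuousOn (hn : 0 < n) (Abar : Matrix (Fin n) (Fin n) ℝ) (hA : IsHurwitz Abar)
    (Q : Matrix (Fin n) (Fin n) ℝ) : ContinuousOn (Pt Abar Q) (Set.Icc 0 1) := by
  intro t ht
  apply ContinuousAt.continuousWithinAt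
  have hMt : Continuous (Mt Abar) := by
    apply Continuous.add
    · exact continuous_id.smul continuous_const
    · exact ((continuous_const.mul continuous_id).sub continuous_const).smul continuous_const
  have hdet : (Mt Abar t).det ≠ 0 := det_Mt_ne_zero hn Abar hA ht.1 ht.2
  have hinv : ContinuousAt (fun s => (Mt Abar s)⁻¹) t := by
    apply ContinuousAt.comp _ hMt.continuousAt
    apply continuousAt_matrix_inv
    have : (Ring.inverse : ℝ → ℝ) = Inv.inv := by
      funext x
      exact Ring.inverse_eq_inv x
    rw [this]
    exact continuousAt_inv₀ hdet
  have hlin : Continuous (⇑(bM.equivFun.symm) : (Fin n × Fin n → ℝ) → Matrix (Fin n) (Fin n) ℝ) :=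
    LinearMap.continuous_of_finiteDimensional
      (bM.equivFun.symm : (Fin n × Fin n → ℝ) ≃ₗ[ℝ] Matrix (Fin n) (Fin n) ℝ).toLinearMap
  have hmv : Continuous (fun M : Matrix (Fin n × Fin n) (Fin n × Fin n) ℝ =>
      M *ᵥ bM.equivFun (-Q)) :=
    continuous_id.matrix_mulVec continuous_const
  exact ((hlin.comp hmv).continuousAt).comp hinv

def Uset (n : ℕ) : Set (Matrix (Fin n) (Fin n) ℝ) :=
  {M | ∀ x ∈ Metric.sphere (0 : Fin n → ℝ) 1, 0 < x ⬝ᵥ M *ᵥ x}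

def Vset (n : ℕ) : Set (Matrix (Fin n) (Fin n) ℝ) :=
  {M | ∃ x : Fin n → ℝ, x ⬝ᵥ M *ᵥ x < 0}

lemma pos_unscale {c q : ℝ} (hc : 0 < c) (h : 0 < c * (c * q)) : 0 < q := by
  nlinarith [mul_pos hc hc]

lemma quad_continuous :
    Continuous (fun p : (Matrix (Fin n) (Fin n) ℝ) × (Fin n → ℝ) => p.2 ⬝ᵥ p.1 *ᵥ p.2) :=
  continuous_snd.dotProduct (continuous_fst.matrix_mulVec continuous_snd)

lemma isOpen_Uset : IsOpen (Uset n) := by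
  rw [isOpen_iff_mem_nhds]
  intro M hM
  have hK : IsCompact (Metric.sphere (0 : Fin n → ℝ) 1) := isCompact_sphere 0 1
  have hev := hK.eventually_forall_of_forall_eventually (x₀ := M)
    (P := fun M (x : Fin n → ℝ) => 0 < x ⬝ᵥ M *ᵥ x) ?_
  · exact hev
  · intro x hx
    have hopen : IsOpen {p : (Matrix (Fin n) (Fin n) ℝ) × (Fin n → ℝ) |
        0 < p.2 ⬝ᵥ p.1 *ᵥ p.2} := isOpen_lt continuous_const quad_continuous
    exact (hopen.eventually_mem (hM x hx)).mono fun z hz => hz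

lemma isOpen_Vset : IsOpen (Vset n) := by
  have h : Vset n = ⋃ x : Fin n → ℝ, {M | x ⬝ᵥ M *ᵥ x < 0} := by
    ext M; simp [Vset]
  rw [h]
  exact isOpen_iUnion fun x => isOpen_lt
    (continuous_const.dotProduct (continuous_id.matrix_mulVec continuous_const))
    continuous_const

lemma not_mem_UV {M : Matrix (Fin n) (Fin n) ℝ} (hU : M ∈ Uset n) (hV : M ∈ Vset n) :
    False := by
  obtain ⟨x, hx⟩ := hV
  have hx0 : x ≠ 0 := by
    rintro rfl
    simp at hx
  have hnx : ‖x‖ ≠ 0 := norm_ne_zero_iff.mpr hx0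
  set c : ℝ := ‖x‖⁻¹ with hc
  have hcx : c • x ∈ Metric.sphere (0 : Fin n → ℝ) 1 := by
    rw [mem_sphere_zero_iff_norm, norm_smul, hc, norm_inv, norm_norm, inv_mul_cancel₀ hnx]
  have h2 := hU _ hcx
  rw [smul_dotProduct, Matrix.mulVec_smul, dotProduct_smul, smul_eq_mul,
    smul_eq_mul] at h2
  have hcpos : 0 < c := by positivity
  exact absurd (pos_unscale hcpos h2) (not_lt.mpr hx.le)

lemma mem_Uset_of_posDef {M : Matrix (Fin n) (Fin n) ℝ} (hM : M.PosDef) : M ∈ Uset n := by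
  intro x hx
  have hx0 : x ≠ 0 := by
    rw [mem_sphere_zero_iff_norm] at hx
    intro h; rw [h] at hx; simp at hx
  simpa [star_trivial] using hM.dotProduct_mulVec_pos hx0

lemma posDef_of_mem_Uset {M : Matrix (Fin n) (Fin n) ℝ} (hsymm : M.IsSymm) (hU : M ∈ Uset n) :
    M.PosDef := by
  apply Matrix.PosDef.of_dotProduct_mulVec_pos
  · rw [Matrix.IsHermitian, Matrix.conjTranspose_eq_transpose_of_trivial]
    exact hsymm
  · intro x hx0
    have hnx : ‖x‖ ≠ 0 := norm_ne_zero_iff.mpr hx0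
    set c : ℝ := ‖x‖⁻¹ with hc
    have hcx : c • x ∈ Metric.sphere (0 : Fin n → ℝ) 1 := by
      rw [mem_sphere_zero_iff_norm, norm_smul, hc, norm_inv, norm_norm, inv_mul_cancel₀ hnx]
    have h2 := hU _ hcx
    rw [smul_dotProduct, Matrix.mulVec_smul, dotProduct_smul, smul_eq_mul,
      smul_eq_mul] at h2
    have hcpos : 0 < c := by positivity
    rw [star_trivial]
    exact pos_unscale hcpos h2

lemma mem_union_UV {M : Matrix (Fin n) (Fin n) ℝ} (hsymm : M.IsSymm)
    (hinj : ∀ v : Fin n → ℝ, M *ᵥ v = 0 → v = 0) : M ∈ Uset n ∪ Vset n := by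
  by_cases h : ∀ x : Fin n → ℝ, 0 ≤ x ⬝ᵥ M *ᵥ x
  · left
    have hherm : M.IsHermitian := by
      rw [Matrix.IsHermitian, Matrix.conjTranspose_eq_transpose_of_trivial]
      exact hsymm
    have hPSD : M.PosSemidef := Matrix.PosSemidef.of_dotProduct_mulVec_nonneg hherm (fun x => by rw [star_trivial]; exact h x)
    intro x hx
    have hx0 : x ≠ 0 := by
      rw [mem_sphere_zero_iff_norm] at hx
      intro hh; rw [hh] at hx; simp at hx
    refine lt_of_le_of_ne (h x) fun h0 => hx0 (hinj x ?_)
    rw [← hPSD.dotProduct_mulVec_zero_iff x, star_trivial]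
    exact h0.symm
  · right
    push_neg at h
    exact h

end LyapAux

end LyapProofAux

/-- for a Hurwitz matrix Ā and symmetric positive definite Q,
the Lyapunov equation Āᵀ P + P Ā = -Q has a symmetric positive definite
solution P. -/
theorem exists_lyapunov_solution_of_hurwitz
    {n : ℕ} (Abar : Matrix (Fin n) (Fin n) ℝ) (hA : IsHurwitz Abar)
    (Q : Matrix (Fin n) (Fin n) ℝ) (hQsymm : Q.IsSymm) (hQ : Q.PosDef) :
    ∃ P : Matrix (Fin n) (Fin n) ℝ, P.IsSymm ∧ P.PosDef ∧
      Abarᵀ * P + P * Abar = -Q := by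
  rcases Nat.eq_zero_or_pos n with hn | hn
  · subst hn
    refine ⟨Q, hQsymm, hQ, ?_⟩
    ext i j
    exact i.elim0
  open LyapAux in
  refine ⟨Pt Abar Q 1, ?_, ?_, ?_⟩
  · exact Pt_isSymm hn Abar hA Q hQsymm zero_le_one le_rfl
  · -- positive definiteness via connectedness
    have hcont := Pt_continuousOn hn Abar hA Q
    have himg : IsPreconnected (Pt Abar Q '' Set.Icc 0 1) :=
      (isPreconnected_Icc).image _ hcont
    have hsub : Pt Abar Q '' Set.Icc 0 1 ⊆ Uset n ∪ Vset n := by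
      rintro _ ⟨t, ht, rfl⟩
      exact mem_union_UV (Pt_isSymm hn Abar hA Q hQsymm ht.1 ht.2)
        (fun v hv => Pt_mulVec_inj hn Abar hA Q hQsymm hQ ht.1 ht.2 hv)
    have hU0 : Pt Abar Q 0 ∈ Uset n := by
      intro x hx
      have hx0 : x ≠ 0 := by
        rw [mem_sphere_zero_iff_norm] at hx
        intro hh; rw [hh] at hx; simp at hx
      have hq := hQ.dotProduct_mulVec_pos hx0
      rw [star_trivial] at hq
      have h2 : x ⬝ᵥ (Pt Abar Q 0 + Pt Abar Q 0) *ᵥ x = x ⬝ᵥ Q *ᵥ x := by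
        rw [Pt_zero hn Abar hA Q]
      rw [Matrix.add_mulVec, dotProduct_add] at h2
      linarith
    have hVempty : ∀ t ∈ Set.Icc (0:ℝ) 1, Pt Abar Q t ∉ Vset n := by
      intro t ht hV
      have hne : (Pt Abar Q '' Set.Icc 0 1 ∩ (Uset n ∩ Vset n)).Nonempty := by
        apply himg (Uset n) (Vset n) isOpen_Uset isOpen_Vset hsub
        · exact ⟨Pt Abar Q 0, ⟨0, Set.mem_Icc.mpr ⟨le_refl 0, zero_le_one⟩, rfl⟩, hU0⟩
        · exact ⟨Pt Abar Q t, ⟨t, ht, rfl⟩, hV⟩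
      obtain ⟨M, _, hMU, hMV⟩ := hne
      exact not_mem_UV hMU hMV
    have hP1 : Pt Abar Q 1 ∈ Uset n := by
      have h1 : (1:ℝ) ∈ Set.Icc (0:ℝ) 1 := Set.mem_Icc.mpr ⟨zero_le_one, le_refl 1⟩
      rcases hsub ⟨1, h1, rfl⟩ with h | h
      · exact h
      · exact absurd h (hVempty 1 h1)
    exact posDef_of_mem_Uset (Pt_isSymm hn Abar hA Q hQsymm zero_le_one le_rfl) hP1
  · have heq := lyapL_Pt hn Abar hA Q zero_le_one le_rfl
    have hA1 : At Abar 1 = Abar := by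
      simp [At]
    rw [hA1, lyapL_apply] at heq
    exact heq
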